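/- For each T with 0 < T < T_c there exists a unique Y = f(T) with 0 < Y < 2Δ₀² such that ∫_{2k_B T_c ε}^{ℏω_D} (1/√(ξ²+f(T))) tanh(√(ξ²+f(T))/(2k_B T)) dξ = 1/(U₀N₀), where T_c is defined by ∫_{ε}^{ℏω_D/(2k_B T_c)} tanh(η)/η dη = 1/(U₀N₀). -/

import Mathlib

open Real intervalIntegral

private lemma myContinuousTanh : Continuous Real.tanh := by
  have : Real.tanh = fun x => Real.sinh x / Real.cosh x :=
    funext fun x => Real.tanh_eq_sinh_div_cosh x
  rw [this]
  exact Real.continuous_sinh.div Real.continuous_cosh fun x => (Real.cosh_pos x).ne'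

private lemma myTanhLt {x y : ℝ} (h : x < y) : Real.tanh x < Real.tanh y := by
  rw [Real.tanh_eq_sinh_div_cosh, Real.tanh_eq_sinh_div_cosh,
    div_lt_div_iff₀ (Real.cosh_pos x) (Real.cosh_pos y)]
  have hs : Real.sinh (x - y) < 0 := by
    rw [← Real.sinh_zero]; exact Real.sinh_lt_sinh.2 (by linarith)
  rw [Real.sinh_sub] at hs
  linarith

private lemma myTanhPos {x : ℝ} (h : 0 < x) : 0 < Real.tanh x := by
  have := myTanhLt h; rwa [Real.tanh_zero] at this

private lemma myTanhLtOne (x : ℝ) : Real.tanh x < 1 := by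
  rw [Real.tanh_eq_sinh_div_cosh, div_lt_one (Real.cosh_pos x)]
  have := Real.cosh_sub_sinh x
  have := Real.exp_pos (-x)
  linarith

private lemma myHasDerivAtTanh (x : ℝ) : HasDerivAt Real.tanh (1 / Real.cosh x ^ 2) x := by
  have h := (Real.hasDerivAt_sinh x).div (Real.hasDerivAt_cosh x) (Real.cosh_pos x).ne'
  have heq : (Real.sinh / Real.cosh) = Real.tanh :=
    funext fun y => (Real.tanh_eq_sinh_div_cosh y).symm
  rw [heq] at h
  refine h.congr_deriv ?_
  have h2 := Real.cosh_sq_sub_sinh_sq x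
  congr 1
  nlinarith

private lemma myTanhDivAnti : StrictAntiOn (fun u => Real.tanh u / u) (Set.Ioi 0) := by
  apply strictAntiOn_of_deriv_neg (convex_Ioi 0)
  · exact (myContinuousTanh.continuousOn).div continuousOn_id
      (fun x hx => ne_of_gt (by exact_mod_cast hx))
  · intro x hx
    rw [interior_Ioi] at hx
    have hx0 : (0:ℝ) < x := hx
    have hd : HasDerivAt (fun u => Real.tanh u / u)
        ((1 / Real.cosh x ^ 2 * x - Real.tanh x * 1) / x ^ 2) x :=
      (myHasDerivAtTanh x).div (hasDerivAt_id x) hx0.ne'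
    rw [hd.deriv]
    apply div_neg_of_neg_of_pos _ (by positivity)
    have hch : (0:ℝ) < Real.cosh x := Real.cosh_pos x
    have hsc : x < Real.sinh x * Real.cosh x := by
      have h1 : x < Real.sinh x := Real.self_lt_sinh_iff.2 hx0
      have h2 : 1 ≤ Real.cosh x := Real.one_le_cosh x
      nlinarith [Real.sinh_pos_iff.2 hx0]
    have : Real.tanh x = Real.sinh x / Real.cosh x := Real.tanh_eq_sinh_div_cosh x
    rw [this, sub_neg, mul_one, div_mul_eq_mul_div, div_lt_div_iff₀ (by positivity) hch]
    nlinarith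

/-- key monotonicity: for `0 < c` and `0 < s₁ < s₂`,
`tanh (s₂/c)/s₂ < tanh (s₁/c)/s₁`. -/
private lemma myKeyMono {c s₁ s₂ : ℝ} (hc : 0 < c) (h1 : 0 < s₁) (h12 : s₁ < s₂) :
    Real.tanh (s₂ / c) / s₂ < Real.tanh (s₁ / c) / s₁ := by
  have h2 : 0 < s₂ := h1.trans h12
  have hlt : s₁ / c < s₂ / c := by gcongr
  have hA : Real.tanh (s₂ / c) / (s₂ / c) < Real.tanh (s₁ / c) / (s₁ / c) :=
    myTanhDivAnti (Set.mem_Ioi.2 (by positivity)) (Set.mem_Ioi.2 (by positivity)) hlt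
  have e : ∀ s : ℝ, 0 < s → Real.tanh (s / c) / (s / c) = c * (Real.tanh (s / c) / s) := by
    intro s hs
    field_simp
  rw [e s₁ h1, e s₂ h2] at hA
  exact (mul_lt_mul_iff_right₀ hc).mp hA

set_option maxHeartbeats 1600000 in
/-- For each `0 < T < T_c` there is a unique `Y = f(T)` with `0 < Y < 2Δ₀²` solving
the gap equation, where `T_c` is defined by
`∫_ε^{ℏω_D/(2k_BT_c)} tanh η/η dη = 1/(U₀N₀)`. -/
theorem gap_equation_exists_unique
    (kB hbar ωD U0 N0 ε Tc : ℝ)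
    (hkB : 0 < kB) (hhbar : 0 < hbar) (hωD : 0 < ωD)
    (hU0 : 0 < U0) (hN0 : 0 < N0) (hε : 0 < ε) (hTc : 0 < Tc)
    (hcut : 2*kB*Tc*ε < hbar*ωD)
    (hTcdef : (∫ η in ε..(hbar*ωD/(2*kB*Tc)), Real.tanh η / η) = 1/(U0*N0)) :
    ∀ T : ℝ, 0 < T → T < Tc →
      ∃! Y : ℝ, 0 < Y ∧ Y < 2*(hbar*ωD/Real.sinh (1/(U0*N0)))^2 ∧
        (∫ ξ in (2*kB*Tc*ε)..(hbar*ωD),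
          (1/Real.sqrt (ξ^2+Y)) * Real.tanh (Real.sqrt (ξ^2+Y)/(2*kB*T)))
          = 1/(U0*N0) := by
  intro T hT hTTc
  set L := 1/(U0*N0) with hL_def
  set b := hbar*ωD with hb_def
  set d := 2*kB*Tc with hd_def
  set c := 2*kB*T with hc_def
  set a := d*ε with ha_def
  set M := 2*(b/Real.sinh L)^2 with hM_def
  have hb0 : 0 < b := by positivity
  have hd0 : 0 < d := by positivity
  have hc0 : 0 < c := by positivity
  have hcd : c < d := by
    rw [hc_def, hd_def]; nlinarith
  have ha0 : 0 < a := by positivity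
  have hab : a < b := hcut
  have hL0 : 0 < L := by positivity
  have hsL : 0 < Real.sinh L := Real.sinh_pos_iff.2 hL0
  have hΔ : 0 < b / Real.sinh L := div_pos hb0 hsL
  have hM0 : 0 < M := by rw [hM_def]; positivity
  have huIcc : Set.uIcc a b = Set.Icc a b := Set.uIcc_of_le hab.le
  -- continuity / integrability of the integrand for fixed Y ≥ 0
  have hgcont : ∀ Y : ℝ, 0 ≤ Y → ContinuousOn
      (fun ξ => (1/Real.sqrt (ξ^2+Y)) * Real.tanh (Real.sqrt (ξ^2+Y)/c))
      (Set.uIcc a b) := by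
    intro Y hY
    rw [huIcc]
    have hsq : Continuous fun ξ : ℝ => Real.sqrt (ξ^2+Y) :=
      Real.continuous_sqrt.comp ((continuous_pow 2).add continuous_const)
    have hne : ∀ ξ ∈ Set.Icc a b, Real.sqrt (ξ^2+Y) ≠ 0 := by
      intro ξ hξ
      have h1 : 0 < ξ := lt_of_lt_of_le ha0 hξ.1
      have : 0 < ξ^2 + Y := by nlinarith
      exact (Real.sqrt_pos.2 this).ne'
    exact ((continuousOn_const.div hsq.continuousOn hne)).mul
      ((myContinuousTanh.comp (hsq.div_const c)).continuousOn)
  have hInt : ∀ Y : ℝ, 0 ≤ Y → IntervalIntegrable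
      (fun ξ => (1/Real.sqrt (ξ^2+Y)) * Real.tanh (Real.sqrt (ξ^2+Y)/c)) MeasureTheory.volume a b :=
    fun Y hY => (hgcont Y hY).intervalIntegrable
  -- strict monotonicity in Y
  have hmono : ∀ Y₁ Y₂ : ℝ, 0 ≤ Y₁ → Y₁ < Y₂ →
      (∫ ξ in a..b, (1/Real.sqrt (ξ^2+Y₂)) * Real.tanh (Real.sqrt (ξ^2+Y₂)/c))
      < (∫ ξ in a..b, (1/Real.sqrt (ξ^2+Y₁)) * Real.tanh (Real.sqrt (ξ^2+Y₁)/c)) := by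
    intro Y₁ Y₂ hY1 hlt
    have hY2 : (0:ℝ) ≤ Y₂ := le_trans hY1 hlt.le
    have hsub : 0 < ∫ ξ in a..b,
        ((1/Real.sqrt (ξ^2+Y₁)) * Real.tanh (Real.sqrt (ξ^2+Y₁)/c)
          - (1/Real.sqrt (ξ^2+Y₂)) * Real.tanh (Real.sqrt (ξ^2+Y₂)/c)) := by
      apply intervalIntegral.intervalIntegral_pos_of_pos_on
      · exact (hInt Y₁ hY1).sub (hInt Y₂ hY2)
      · intro ξ hξ
        have hξ0 : 0 < ξ := lt_trans ha0 hξ.1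
        have hp1 : 0 < ξ^2 + Y₁ := by nlinarith
        have hs1 : 0 < Real.sqrt (ξ^2+Y₁) := Real.sqrt_pos.2 hp1
        have hs12 : Real.sqrt (ξ^2+Y₁) < Real.sqrt (ξ^2+Y₂) :=
          Real.sqrt_lt_sqrt hp1.le (by linarith)
        have hkey := myKeyMono hc0 hs1 hs12
        rw [sub_pos, one_div_mul_eq_div, one_div_mul_eq_div]
        exact hkey
      · exact hab
    rw [intervalIntegral.integral_sub (hInt Y₁ hY1) (hInt Y₂ hY2)] at hsub
    linarith
  -- change of variables for the T_c integral
  have hchg : (∫ ξ in a..b, Real.tanh (ξ/d) / ξ) = L := by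
    have h1 : Set.EqOn (fun ξ => Real.tanh (ξ/d) / ξ)
        (fun ξ => (fun x => d⁻¹ • (Real.tanh x / x)) (ξ/d)) (Set.uIcc a b) := by
      intro ξ hξ
      rw [huIcc] at hξ
      have hξ0 : 0 < ξ := lt_of_lt_of_le ha0 hξ.1
      simp only [smul_eq_mul]
      field_simp
    rw [intervalIntegral.integral_congr h1,
      intervalIntegral.integral_comp_div (fun x => d⁻¹ • (Real.tanh x / x)) hd0.ne',
      intervalIntegral.integral_smul, ha_def, mul_comm d ε, mul_div_assoc,
      div_self hd0.ne', mul_one, smul_smul, mul_inv_cancel₀ hd0.ne', one_smul]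
    exact hTcdef
  -- lower bound at Y = 0
  have hG0 : L < ∫ ξ in a..b, (1/Real.sqrt (ξ^2+0)) * Real.tanh (Real.sqrt (ξ^2+0)/c) := by
    have hdint : IntervalIntegrable (fun ξ => Real.tanh (ξ/d) / ξ) MeasureTheory.volume a b := by
      apply ContinuousOn.intervalIntegrable
      rw [huIcc]
      exact ((myContinuousTanh.comp (continuous_id.div_const d)).continuousOn).div
        continuousOn_id (fun ξ hξ => (lt_of_lt_of_le ha0 hξ.1).ne')
    have hsub : 0 < ∫ ξ in a..b,
        ((1/Real.sqrt (ξ^2+0)) * Real.tanh (Real.sqrt (ξ^2+0)/c) - Real.tanh (ξ/d) / ξ) := by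
      apply intervalIntegral.intervalIntegral_pos_of_pos_on
      · exact (hInt 0 le_rfl).sub hdint
      · intro ξ hξ
        have hξ0 : 0 < ξ := lt_trans ha0 hξ.1
        have hsq : Real.sqrt (ξ^2+0) = ξ := by
          rw [add_zero, Real.sqrt_sq hξ0.le]
        rw [hsq]
        have htlt : Real.tanh (ξ/d) < Real.tanh (ξ/c) :=
          myTanhLt (div_lt_div_of_pos_left hξ0 hc0 hcd)
        have hlt2 : Real.tanh (ξ/d) / ξ < Real.tanh (ξ/c) / ξ := by gcongr
        rw [sub_pos, one_div_mul_eq_div]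
        exact hlt2
      · exact hab
    rw [intervalIntegral.integral_sub (hInt 0 le_rfl) hdint, hchg] at hsub
    linarith
  -- upper bound at Y = M
  have hGM : (∫ ξ in a..b, (1/Real.sqrt (ξ^2+M)) * Real.tanh (Real.sqrt (ξ^2+M)/c)) < L := by
    have hscont : Continuous fun ξ : ℝ => 1/Real.sqrt (ξ^2+M) := by
      apply continuous_const.div
        (Real.continuous_sqrt.comp ((continuous_pow 2).add continuous_const))
      intro ξ
      have : 0 < ξ^2 + M := by positivity
      exact (Real.sqrt_pos.2 this).ne'
    have hsint : IntervalIntegrable (fun ξ => 1/Real.sqrt (ξ^2+M)) MeasureTheory.volume a b :=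
      hscont.intervalIntegrable a b
    have hstep1 : (∫ ξ in a..b, (1/Real.sqrt (ξ^2+M)) * Real.tanh (Real.sqrt (ξ^2+M)/c))
        ≤ ∫ ξ in a..b, 1/Real.sqrt (ξ^2+M) := by
      apply intervalIntegral.integral_mono_on hab.le (hInt M hM0.le) hsint
      intro ξ hξ
      have h1 : (0:ℝ) ≤ 1/Real.sqrt (ξ^2+M) := by positivity
      calc (1/Real.sqrt (ξ^2+M)) * Real.tanh (Real.sqrt (ξ^2+M)/c)
          ≤ (1/Real.sqrt (ξ^2+M)) * 1 :=
            mul_le_mul_of_nonneg_left (myTanhLtOne _).le h1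
        _ = 1/Real.sqrt (ξ^2+M) := mul_one _
    have hsqM : 0 < Real.sqrt M := Real.sqrt_pos.2 hM0
    have hstep2 : (∫ ξ in a..b, 1/Real.sqrt (ξ^2+M))
        = Real.arsinh (b/Real.sqrt M) - Real.arsinh (a/Real.sqrt M) := by
      apply intervalIntegral.integral_eq_sub_of_hasDerivAt
        (f := fun x => Real.arsinh (x/Real.sqrt M))
      · intro ξ _
        have h : HasDerivAt (fun x => Real.arsinh (x/Real.sqrt M))
            ((Real.sqrt (1+(ξ/Real.sqrt M)^2))⁻¹ • ((1:ℝ)/Real.sqrt M)) ξ :=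
          HasDerivAt.arsinh (((hasDerivAt_id ξ).div_const (Real.sqrt M)).congr_deriv
            (by rw [one_div]))
        refine h.congr_deriv ?_
        rw [smul_eq_mul]
        have hkey : Real.sqrt (1+(ξ/Real.sqrt M)^2) * Real.sqrt M = Real.sqrt (ξ^2+M) := by
          rw [← Real.sqrt_mul (by positivity)]
          congr 1
          rw [div_pow, Real.sq_sqrt hM0.le]
          field_simp
          ring
        rw [← hkey, one_div, one_div, mul_inv]
      · exact hsint
    have harsa : 0 < Real.arsinh (a/Real.sqrt M) := by
      rw [← Real.arsinh_zero]
      exact Real.arsinh_lt_arsinh.2 (by positivity)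
    have harsb : Real.arsinh (b/Real.sqrt M) < L := by
      have hΔM : b/Real.sinh L < Real.sqrt M := by
        have hlt : (b/Real.sinh L)^2 < M := by rw [hM_def]; nlinarith
        have := Real.sqrt_lt_sqrt (by positivity : (0:ℝ) ≤ (b/Real.sinh L)^2) hlt
        rwa [Real.sqrt_sq hΔ.le] at this
      have hblt : b/Real.sqrt M < Real.sinh L := by
        rw [div_lt_iff₀ hsqM]
        have h1 : (b/Real.sinh L) * Real.sinh L = b := div_mul_cancel₀ b hsL.ne'
        nlinarith
      calc Real.arsinh (b/Real.sqrt M) < Real.arsinh (Real.sinh L) :=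
            Real.arsinh_lt_arsinh.2 hblt
        _ = L := Real.arsinh_sinh L
    linarith
  -- continuity of the integral in Y via a clamped integrand
  set F : ℝ → ℝ → ℝ := fun Y ξ =>
    (1/Real.sqrt ((max ξ a)^2 + max Y 0)) * Real.tanh (Real.sqrt ((max ξ a)^2 + max Y 0)/c)
    with hF_def
  have hFcont : Continuous (Function.uncurry F) := by
    have hq : Continuous fun p : ℝ × ℝ => (max p.2 a)^2 + max p.1 0 :=
      ((continuous_snd.max continuous_const).pow 2).add (continuous_fst.max continuous_const)
    have hqpos : ∀ p : ℝ × ℝ, 0 < (max p.2 a)^2 + max p.1 0 := by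
      intro p
      have h1 : a ≤ max p.2 a := le_max_right _ _
      have h2 : (0:ℝ) ≤ max p.1 0 := le_max_right _ _
      nlinarith
    have hsq : Continuous fun p : ℝ × ℝ => Real.sqrt ((max p.2 a)^2 + max p.1 0) :=
      Real.continuous_sqrt.comp hq
    have hne : ∀ p : ℝ × ℝ, Real.sqrt ((max p.2 a)^2 + max p.1 0) ≠ 0 :=
      fun p => (Real.sqrt_pos.2 (hqpos p)).ne'
    exact (continuous_const.div hsq hne).mul (myContinuousTanh.comp (hsq.div_const c))
  have hGcont : Continuous fun Y => ∫ ξ in Set.Icc a b, F Y ξ :=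
    continuous_parametric_integral_of_continuous hFcont isCompact_Icc
  have hGF : ∀ Y : ℝ, 0 ≤ Y → (∫ ξ in Set.Icc a b, F Y ξ)
      = ∫ ξ in a..b, (1/Real.sqrt (ξ^2+Y)) * Real.tanh (Real.sqrt (ξ^2+Y)/c) := by
    intro Y hY
    rw [intervalIntegral.integral_of_le hab.le, ← MeasureTheory.integral_Icc_eq_integral_Ioc]
    apply MeasureTheory.setIntegral_congr_fun measurableSet_Icc
    intro ξ hξ
    simp only [hF_def, max_eq_left hξ.1, max_eq_left hY]
  -- intermediate value theorem
  have hmem : L ∈ Set.Icc ((fun Y => ∫ ξ in Set.Icc a b, F Y ξ) M)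
      ((fun Y => ∫ ξ in Set.Icc a b, F Y ξ) 0) := by
    simp only
    rw [hGF M hM0.le, hGF 0 le_rfl]
    exact ⟨hGM.le, hG0.le⟩
  obtain ⟨Y, hYmem, hYeq⟩ := intermediate_value_Icc' hM0.le hGcont.continuousOn hmem
  have hYint : (∫ ξ in a..b, (1/Real.sqrt (ξ^2+Y)) * Real.tanh (Real.sqrt (ξ^2+Y)/c)) = L := by
    rw [← hGF Y hYmem.1]; exact hYeq
  have hY0 : Y ≠ 0 := by
    rintro rfl
    rw [hYint] at hG0
    exact lt_irrefl _ hG0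
  have hYM : Y ≠ M := by
    rintro rfl
    rw [hYint] at hGM
    exact lt_irrefl _ hGM
  refine ⟨Y, ⟨lt_of_le_of_ne hYmem.1 (Ne.symm hY0), lt_of_le_of_ne hYmem.2 hYM, hYint⟩, ?_⟩
  rintro Y' ⟨hY'0, _, hY'int⟩
  by_contra hne
  rcases lt_or_gt_of_ne hne with h | h
  · have := hmono Y' Y hY'0.le h
    rw [hYint, hY'int] at this
    exact lt_irrefl _ this
  · have := hmono Y Y' hYmem.1 h
    rw [hYint, hY'int] at this
    exact lt_irrefl _ this
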